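/- Let f : ℝ^d × ℝ^d → ℝ be l-smooth and μ-strongly concave in y, with Φ(x) = max_y f(x,y), ∇Φ (l+κl)-Lipschitz, κ = l/μ. For the update x⁺ = x − η₁ h with any vector h: Φ(x⁺) − Φ(x) ≤ −(η₁/2)‖∇Φ(x)‖² − (η₁/2)(1 − (κl+l)η₁)‖h‖² + 2η₁lκ(Φ(x) − f(x,y)) + η₁‖h − ∇_x f(x,y)‖². -/

import Mathlib

set_option maxHeartbeats 1000000


open scoped RealInnerProductSpace

noncomputable def gradx {d : ℕ}
    (f : EuclideanSpace ℝ (Fin d) → EuclideanSpace ℝ (Fin d) → ℝ)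
    (x y : EuclideanSpace ℝ (Fin d)) : EuclideanSpace ℝ (Fin d) :=
  gradient (fun x' => f x' y) x

noncomputable def grady {d : ℕ}
    (f : EuclideanSpace ℝ (Fin d) → EuclideanSpace ℝ (Fin d) → ℝ)
    (x y : EuclideanSpace ℝ (Fin d)) : EuclideanSpace ℝ (Fin d) :=
  gradient (f x) y

/-- Descent lemma for a function with Lipschitz gradient. -/
lemma descent_lemma {E : Type*} [NormedAddCommGroup E] [InnerProductSpace ℝ E]
    [CompleteSpace E] (Φ : E → ℝ) (L : ℝ) (hL : 0 ≤ L)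
    (hg : ∀ x, HasGradientAt Φ (gradient Φ x) x)
    (hlip : ∀ a b, ‖gradient Φ a - gradient Φ b‖ ≤ L * ‖a - b‖)
    (a b : E) :
    Φ b ≤ Φ a + ⟪gradient Φ a, b - a⟫ + L / 2 * ‖b - a‖ ^ 2 := by
  set v := b - a with hv
  have hc : ∀ t : ℝ, HasDerivAt (fun t : ℝ => a + t • v) v t := fun t => by
    simpa using ((hasDerivAt_id t).smul_const v).const_add a
  set g : ℝ → ℝ := fun t =>
    Φ (a + t • v) - t * ⟪gradient Φ a, v⟫ - L / 2 * t ^ 2 * ‖v‖ ^ 2 with hgdef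
  have hgd : ∀ t : ℝ, HasDerivAt g
      (⟪gradient Φ (a + t • v), v⟫ - ⟪gradient Φ a, v⟫ - L / 2 * (2 * t) * ‖v‖ ^ 2) t := by
    intro t
    have h1 : HasDerivAt (fun t : ℝ => Φ (a + t • v)) (⟪gradient Φ (a + t • v), v⟫) t := by
      have := (hg (a + t • v)).hasFDerivAt.comp_hasDerivAt t (hc t)
      simp only [InnerProductSpace.toDual_apply_apply] at this
      exact this
    have h2 : HasDerivAt (fun t : ℝ => t * ⟪gradient Φ a, v⟫)
        (⟪gradient Φ a, v⟫) t := by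
      simpa using (hasDerivAt_id t).mul_const (⟪gradient Φ a, v⟫)
    have h3 : HasDerivAt (fun t : ℝ => L / 2 * t ^ 2 * ‖v‖ ^ 2)
        (L / 2 * (2 * t) * ‖v‖ ^ 2) t := by
      have h' := ((hasDerivAt_pow 2 t).const_mul (L / 2)).mul_const (‖v‖ ^ 2)
      have heq : L / 2 * (2 * t) * ‖v‖ ^ 2
          = L / 2 * ((2 : ℕ) * t ^ (2 - 1)) * ‖v‖ ^ 2 := by norm_num
      rw [heq]; exact h' 
    exact (h1.sub h2).sub h3
  have hanti : AntitoneOn g (Set.Icc 0 1) := by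
    apply antitoneOn_of_deriv_nonpos (convex_Icc 0 1)
    · exact fun t _ => ((hgd t).continuousAt).continuousWithinAt
    · exact fun t _ => ((hgd t).differentiableAt).differentiableWithinAt
    · intro t ht
      rw [interior_Icc] at ht
      rw [(hgd t).deriv]
      have hb1 : ⟪gradient Φ (a + t • v), v⟫ - ⟪gradient Φ a, v⟫
          = ⟪gradient Φ (a + t • v) - gradient Φ a, v⟫ := by
        rw [inner_sub_left]
      have hb2 : ⟪gradient Φ (a + t • v) - gradient Φ a, v⟫
          ≤ ‖gradient Φ (a + t • v) - gradient Φ a‖ * ‖v‖ := real_inner_le_norm _ _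
      have hb3 : ‖gradient Φ (a + t • v) - gradient Φ a‖ ≤ L * (t * ‖v‖) := by
        have := hlip (a + t • v) a
        simpa [norm_smul, abs_of_pos ht.1] using this
      have hvn : (0:ℝ) ≤ ‖v‖ := norm_nonneg _
      nlinarith [mul_le_mul_of_nonneg_right hb3 hvn]
  have key := hanti (Set.left_mem_Icc.2 zero_le_one) (Set.right_mem_Icc.2 zero_le_one)
    zero_le_one
  have hg0 : g 0 = Φ a := by simp [hgdef]
  have hg1 : g 1 = Φ b - ⟪gradient Φ a, v⟫ - L / 2 * ‖v‖ ^ 2 := by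
    simp [hgdef, hv]
  rw [hg0, hg1] at key
  linarith

/-- Quadratic growth at the maximizer for a `μ`-strongly concave function. -/
lemma strong_conc_growth {E : Type*} [NormedAddCommGroup E] [InnerProductSpace ℝ E]
    (g : E → ℝ) (μ : ℝ) (hμ : 0 < μ) (ys : E)
    (hconc : ConcaveOn ℝ Set.univ (fun y => g y + μ / 2 * ‖y‖ ^ 2))
    (hmax : ∀ y, g y ≤ g ys) (y : E) :
    g y + μ / 2 * ‖y - ys‖ ^ 2 ≤ g ys := by
  have key : ∀ t ∈ Set.Ioc (0:ℝ) 1, g y - g ys ≤ μ / 2 * (t - 1) * ‖y - ys‖ ^ 2 := by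
    intro t ht
    have h1 : (0:ℝ) ≤ 1 - t := by linarith [ht.2]
    have h2 : (0:ℝ) ≤ t := le_of_lt ht.1
    have hcv := hconc.2 (Set.mem_univ ys) (Set.mem_univ y) h1 h2 (by ring)
    simp only [smul_eq_mul] at hcv
    have hpt : (1 - t) • ys + t • y = ys + t • (y - ys) := by
      rw [smul_sub, sub_smul, one_smul]; abel
    rw [hpt] at hcv
    have hmax' := hmax (ys + t • (y - ys))
    have hexp : ‖ys + t • (y - ys)‖ ^ 2
        = ‖ys‖ ^ 2 + 2 * (t * ⟪ys, y - ys⟫) + t ^ 2 * ‖y - ys‖ ^ 2 := by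
      rw [norm_add_sq_real, inner_smul_right, norm_smul]
      rw [Real.norm_eq_abs, abs_of_nonneg h2, mul_pow]
    have hinn : ⟪ys, y - ys⟫ = ⟪ys, y⟫ - ‖ys‖ ^ 2 := by
      rw [inner_sub_right, real_inner_self_eq_norm_sq]
    have hsq : ‖y - ys‖ ^ 2 = ‖y‖ ^ 2 - 2 * ⟪y, ys⟫ + ‖ys‖ ^ 2 := norm_sub_sq_real y ys
    have hsymm : ⟪ys, y⟫ = ⟪y, ys⟫ := real_inner_comm _ _
    rw [hexp] at hcv
    rw [hinn, hsymm] at hcv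
    have ht0 : 0 < t := ht.1
    have e1 : μ / 2 * (‖ys‖ ^ 2 + 2 * (t * (⟪y, ys⟫ - ‖ys‖ ^ 2)) + t ^ 2 * ‖y - ys‖ ^ 2)
        - ((1 - t) * (μ / 2 * ‖ys‖ ^ 2) + t * (μ / 2 * ‖y‖ ^ 2))
        = μ / 2 * (t ^ 2 - t) * ‖y - ys‖ ^ 2 := by rw [hsq]; ring
    have step : t * (g y - g ys) ≤ μ / 2 * (t ^ 2 - t) * ‖y - ys‖ ^ 2 := by
      nlinarith [hcv, hmax', e1]
    have e2 : μ / 2 * (t ^ 2 - t) * ‖y - ys‖ ^ 2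
        = t * (μ / 2 * (t - 1) * ‖y - ys‖ ^ 2) := by ring
    rw [e2] at step
    exact le_of_mul_le_mul_left step ht0
  have hlim : Filter.Tendsto (fun t : ℝ => μ / 2 * (t - 1) * ‖y - ys‖ ^ 2)
      (nhdsWithin 0 (Set.Ioi 0)) (nhds (μ / 2 * ((0:ℝ) - 1) * ‖y - ys‖ ^ 2)) := by
    exact ((continuous_const.mul ((continuous_id.sub continuous_const))).mul
      continuous_const).continuousAt.tendsto.mono_left nhdsWithin_le_nhds
  have hev : ∀ᶠ t in nhdsWithin (0:ℝ) (Set.Ioi 0),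
      g y - g ys ≤ μ / 2 * (t - 1) * ‖y - ys‖ ^ 2 := by
    filter_upwards [Ioc_mem_nhdsGT_of_mem (Set.mem_Ico.2 ⟨le_rfl, zero_lt_one⟩)] with t ht
    exact key t ht
  have hfin : g y - g ys ≤ μ / 2 * ((0:ℝ) - 1) * ‖y - ys‖ ^ 2 :=
    ge_of_tendsto hlim hev
  nlinarith [hfin]

theorem Phi_one_step_bound {d : ℕ} (l μ η₁ : ℝ) (hl : 0 < l) (hμ : 0 < μ) (hη₁ : 0 < η₁)
    (f : EuclideanSpace ℝ (Fin d) → EuclideanSpace ℝ (Fin d) → ℝ)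
    (hdx : ∀ y, Differentiable ℝ (fun x => f x y))
    (hdy : ∀ x, Differentiable ℝ (f x))
    (hsmooth_x : ∀ x₁ y₁ x₂ y₂,
      ‖gradx f x₁ y₁ - gradx f x₂ y₂‖ ≤ l * (‖x₁ - x₂‖ + ‖y₁ - y₂‖))
    (hsmooth_y : ∀ x₁ y₁ x₂ y₂,
      ‖grady f x₁ y₁ - grady f x₂ y₂‖ ≤ l * (‖x₁ - x₂‖ + ‖y₁ - y₂‖))
    (hconc : ∀ x, ConcaveOn ℝ Set.univ (fun y => f x y + (μ / 2) * ‖y‖ ^ 2))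
    (ystar : EuclideanSpace ℝ (Fin d) → EuclideanSpace ℝ (Fin d))
    (hmax : ∀ x, IsMaxOn (f x) Set.univ (ystar x))
    (Φ : EuclideanSpace ℝ (Fin d) → ℝ) (hΦ : ∀ x, Φ x = f x (ystar x))
    (hgradΦ : ∀ x, HasGradientAt Φ (gradx f x (ystar x)) x)
    (hLipΦ : ∀ x₁ x₂, ‖gradient Φ x₁ - gradient Φ x₂‖ ≤ (l + (l / μ) * l) * ‖x₁ - x₂‖) :
    ∀ x y (h : EuclideanSpace ℝ (Fin d)),
      Φ (x - η₁ • h) - Φ x ≤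
        -(η₁ / 2) * ‖gradient Φ x‖ ^ 2
          - (η₁ / 2) * (1 - ((l / μ) * l + l) * η₁) * ‖h‖ ^ 2
          + 2 * η₁ * l * (l / μ) * (Φ x - f x y)
          + η₁ * ‖h - gradx f x y‖ ^ 2 := by
  intro x y h
  set L : ℝ := l + (l / μ) * l with hLdef
  have hL : 0 ≤ L := by positivity
  have hg : ∀ z, HasGradientAt Φ (gradient Φ z) z := by
    intro z; rw [(hgradΦ z).gradient]; exact hgradΦ z
  -- descent lemma
  have hdes := descent_lemma Φ L hL hg hLipΦ x (x - η₁ • h)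
  have hdiff : (x - η₁ • h) - x = -(η₁ • h) := by abel
  rw [hdiff] at hdes
  have hin : ⟪gradient Φ x, -(η₁ • h)⟫ = -(η₁ * ⟪gradient Φ x, h⟫) := by
    rw [inner_neg_right, real_inner_smul_right]
  have hnn : ‖-(η₁ • h)‖ ^ 2 = η₁ ^ 2 * ‖h‖ ^ 2 := by
    rw [norm_neg, norm_smul, Real.norm_eq_abs, abs_of_pos hη₁, mul_pow]
  rw [hin, hnn] at hdes
  -- inner product identity
  have h2eq : 2 * ⟪gradient Φ x, h⟫
      = ‖gradient Φ x‖ ^ 2 + ‖h‖ ^ 2 - ‖gradient Φ x - h‖ ^ 2 := by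
    have := norm_sub_sq_real (gradient Φ x) h
    linarith
  -- strong concavity: quadratic growth
  have hsc : f x y + μ / 2 * ‖y - ystar x‖ ^ 2 ≤ f x (ystar x) :=
    strong_conc_growth (f x) μ hμ (ystar x) (hconc x)
      (fun y' => hmax x (Set.mem_univ y')) y
  have q2 : μ * ‖y - ystar x‖ ^ 2 ≤ 2 * (Φ x - f x y) := by
    rw [hΦ x]; linarith
  -- bias bound
  have hGx : gradient Φ x = gradx f x (ystar x) := (hgradΦ x).gradient
  have hb : ‖gradx f x y - gradient Φ x‖ ≤ l * ‖y - ystar x‖ := by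
    rw [hGx]
    have := hsmooth_x x y x (ystar x)
    simpa [sub_self] using this
  have hb2 : ‖gradx f x y - gradient Φ x‖ ^ 2 ≤ l ^ 2 * ‖y - ystar x‖ ^ 2 := by
    have h0 : (0:ℝ) ≤ ‖gradx f x y - gradient Φ x‖ := norm_nonneg _
    nlinarith [hb, h0, norm_nonneg (y - ystar x)]
  have h8 : l ^ 2 * ‖y - ystar x‖ ^ 2 ≤ 2 * l * (l / μ) * (Φ x - f x y) := by
    have h9 : l ^ 2 * (μ * ‖y - ystar x‖ ^ 2) ≤ l ^ 2 * (2 * (Φ x - f x y)) :=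
      mul_le_mul_of_nonneg_left q2 (sq_nonneg l)
    have heq : 2 * l * (l / μ) * (Φ x - f x y) = l ^ 2 * (2 * (Φ x - f x y)) / μ := by
      field_simp
    rw [heq, le_div_iff₀ hμ]
    nlinarith [h9]
  -- triangle + squares
  have htr : ‖gradient Φ x - h‖ ≤ ‖h - gradx f x y‖ + ‖gradx f x y - gradient Φ x‖ := by
    have : gradient Φ x - h = -((h - gradx f x y) + (gradx f x y - gradient Φ x)) := by abel
    rw [this, norm_neg]
    exact norm_add_le _ _
  have h6 : ‖gradient Φ x - h‖ ^ 2
      ≤ 2 * ‖h - gradx f x y‖ ^ 2 + 2 * ‖gradx f x y - gradient Φ x‖ ^ 2 := by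
    nlinarith [htr, norm_nonneg (gradient Φ x - h), norm_nonneg (h - gradx f x y),
      norm_nonneg (gradx f x y - gradient Φ x),
      sq_nonneg (‖h - gradx f x y‖ - ‖gradx f x y - gradient Φ x‖)]
  have h10 : ‖gradient Φ x - h‖ ^ 2
      ≤ 2 * ‖h - gradx f x y‖ ^ 2 + 4 * l * (l / μ) * (Φ x - f x y) := by
    linarith
  have h11 : η₁ / 2 * ‖gradient Φ x - h‖ ^ 2
      ≤ η₁ / 2 * (2 * ‖h - gradx f x y‖ ^ 2 + 4 * l * (l / μ) * (Φ x - f x y)) :=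
    mul_le_mul_of_nonneg_left h10 (by positivity)
  have h12 : -(η₁ * ⟪gradient Φ x, h⟫)
      = -(η₁ / 2) * ‖gradient Φ x‖ ^ 2 - η₁ / 2 * ‖h‖ ^ 2
        + η₁ / 2 * ‖gradient Φ x - h‖ ^ 2 := by
    linear_combination (-(η₁ / 2)) * h2eq
  rw [h12] at hdes
  rw [hLdef] at hdes
  have e3 : η₁ / 2 * (2 * ‖h - gradx f x y‖ ^ 2 + 4 * l * (l / μ) * (Φ x - f x y))
      = η₁ * ‖h - gradx f x y‖ ^ 2 + 2 * η₁ * l * (l / μ) * (Φ x - f x y) := by ring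
  have e4 : -(η₁ / 2) * (1 - ((l / μ) * l + l) * η₁) * ‖h‖ ^ 2
      = -(η₁ / 2) * ‖h‖ ^ 2 + (l + (l / μ) * l) / 2 * (η₁ ^ 2 * ‖h‖ ^ 2) := by ring
  linarith [hdes, h11, e3, e4]
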